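/- arXiv:1303.2394 — 2 statements merged into one kernel-verified Lean document; each statement's English description precedes it below -/
import Mathlib

section
/- Let L = ℤ + ℤτ ⊂ ℂ with Im(τ) ≠ 0 and let L^∨ be its dual lattice. Let ζ ∈ ℂ. There exists a nonzero entire function g : ℂ → ℂ satisfying g(z + χ) = exp(ζ·conj(χ))·g(z) for all z ∈ ℂ and all χ ∈ L if and only if ζ ∈ L^∨. -/
open Complex

/-- The lattice L = ℤ + ℤτ as a set. -/
def latticeSet (τ : ℂ) : Set ℂ := {χ : ℂ | ∃ n m : ℤ, χ = (n : ℂ) + (m : ℂ) * τ}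

/-- The dual lattice L^∨ = {ζ | Im(χ · conj ζ) ∈ πℤ for all χ ∈ L}. -/
def dualLatticeSet (τ : ℂ) : Set ℂ :=
  {ζ : ℂ | ∀ χ ∈ latticeSet τ, ∃ k : ℤ, (χ * (starRingEnd ℂ) ζ).im = Real.pi * (k : ℝ)}

lemma aux_w_re (ζ χ : ℂ) : (ζ * (starRingEnd ℂ) χ - (starRingEnd ℂ) ζ * χ).re = 0 := by
  simp [Complex.sub_re, Complex.mul_re, Complex.conj_re, Complex.conj_im]

lemma aux_w_im (ζ χ : ℂ) :
    (ζ * (starRingEnd ℂ) χ - (starRingEnd ℂ) ζ * χ).im = 2 * (ζ * (starRingEnd ℂ) χ).im := by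
  simp [Complex.sub_im, Complex.mul_im, Complex.conj_re, Complex.conj_im]; ring

lemma aux_im_swap (ζ χ : ℂ) : (χ * (starRingEnd ℂ) ζ).im = -(ζ * (starRingEnd ℂ) χ).im := by
  simp [Complex.mul_im, Complex.conj_re, Complex.conj_im]; ring

theorem stmt_6 (τ : ℂ) (hτ : τ.im ≠ 0) (ζ : ℂ) :
    (∃ g : ℂ → ℂ, (∃ z : ℂ, g z ≠ 0) ∧ Differentiable ℂ g ∧
        (∀ z : ℂ, ∀ χ ∈ latticeSet τ,
          g (z + χ) = Complex.exp (ζ * (starRingEnd ℂ) χ) * g z))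
    ↔ ζ ∈ dualLatticeSet τ := by
  constructor
  · rintro ⟨g, ⟨z₀, hz₀⟩, hg, hper⟩
    intro χ hχ
    set F : ℂ → ℂ := fun z => g z * Complex.exp (-((starRingEnd ℂ) ζ * z)) with hF
    have hFdiff : Differentiable ℂ F := by
      apply hg.mul
      exact Complex.differentiable_exp.comp (((differentiable_const _).mul differentiable_id).neg)
    have hFz₀ : F z₀ ≠ 0 := mul_ne_zero hz₀ (Complex.exp_ne_zero _)
    have hFper : ∀ z : ℂ, ∀ ψ ∈ latticeSet τ,
        F (z + ψ) = Complex.exp (ζ * (starRingEnd ℂ) ψ - (starRingEnd ℂ) ζ * ψ) * F z := by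
      intro z ψ hψ
      show g (z + ψ) * _ = _
      rw [hper z ψ hψ, mul_add, neg_add, Complex.exp_add, sub_eq_add_neg, Complex.exp_add]
      ring
    have habs : ∀ z : ℂ, ∀ ψ ∈ latticeSet τ, ‖F (z + ψ)‖ = ‖F z‖ := by
      intro z ψ hψ
      rw [hFper z ψ hψ, norm_mul, Complex.norm_exp, aux_w_re, Real.exp_zero, one_mul]
    have hK : IsCompact ((fun p : ℝ × ℝ => (p.1 : ℂ) + (p.2 : ℂ) * τ) ''
        (Set.Icc (0:ℝ) 1 ×ˢ Set.Icc (0:ℝ) 1)) :=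
      (isCompact_Icc.prod isCompact_Icc).image (by fun_prop)
    obtain ⟨C, hC⟩ := hK.exists_bound_of_continuousOn hFdiff.continuous.continuousOn
    have hbound : ∀ z : ℂ, ‖F z‖ ≤ C := by
      intro z
      set b : ℝ := z.im / τ.im with hb
      set a : ℝ := z.re - b * τ.re with ha
      have hab : z = (a : ℂ) + (b : ℂ) * τ := by
        apply Complex.ext
        · simp [ha]
        · simp [hb]
          field_simp
      have hz : z = ((a - ⌊a⌋ : ℝ) + (b - ⌊b⌋ : ℝ) * τ) + ((⌊a⌋ : ℂ) + (⌊b⌋ : ℂ) * τ) := by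
        rw [hab]; push_cast; ring
      have h0a : (0:ℝ) ≤ a - ⌊a⌋ := sub_nonneg.2 (Int.floor_le a)
      have h1a : a - ⌊a⌋ ≤ 1 := by linarith [Int.lt_floor_add_one a]
      have h0b : (0:ℝ) ≤ b - ⌊b⌋ := sub_nonneg.2 (Int.floor_le b)
      have h1b : b - ⌊b⌋ ≤ 1 := by linarith [Int.lt_floor_add_one b]
      have hmem : ((a - ⌊a⌋ : ℝ) + (b - ⌊b⌋ : ℝ) * τ : ℂ) ∈
          ((fun p : ℝ × ℝ => (p.1 : ℂ) + (p.2 : ℂ) * τ) ''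
            (Set.Icc (0:ℝ) 1 ×ˢ Set.Icc (0:ℝ) 1)) :=
        ⟨⟨a - ⌊a⌋, b - ⌊b⌋⟩,
          Set.mk_mem_prod (Set.mem_Icc.2 ⟨h0a, h1a⟩) (Set.mem_Icc.2 ⟨h0b, h1b⟩), rfl⟩
      have hlat : ((⌊a⌋ : ℂ) + (⌊b⌋ : ℂ) * τ) ∈ latticeSet τ := ⟨⌊a⌋, ⌊b⌋, rfl⟩
      calc ‖F z‖ = ‖F (((a - ⌊a⌋ : ℝ) + (b - ⌊b⌋ : ℝ) * τ) + ((⌊a⌋ : ℂ) + (⌊b⌋ : ℂ) * τ))‖ := by rw [← hz]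
        _ = ‖F ((a - ⌊a⌋ : ℝ) + (b - ⌊b⌋ : ℝ) * τ)‖ := habs _ _ hlat
        _ ≤ C := hC _ hmem
    have hconst : ∀ z : ℂ, F z = F z₀ := by
      intro z
      apply hFdiff.apply_eq_apply_of_bounded
      rw [Metric.isBounded_iff_subset_closedBall 0]
      refine ⟨C, ?_⟩
      rintro w ⟨z, rfl⟩
      simpa [Metric.mem_closedBall] using hbound z
    have h1 : Complex.exp (ζ * (starRingEnd ℂ) χ - (starRingEnd ℂ) ζ * χ) = 1 := by
      apply mul_right_cancel₀ hFz₀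
      rw [one_mul, ← hFper z₀ χ hχ, hconst (z₀ + χ)]
    rw [Complex.exp_eq_one_iff] at h1
    obtain ⟨n, hn⟩ := h1
    refine ⟨-n, ?_⟩
    have him := congrArg Complex.im hn
    rw [aux_w_im] at him
    have h2 : ((n : ℂ) * (2 * ↑Real.pi * Complex.I)).im = n * (2 * Real.pi) := by
      simp [Complex.mul_im]
    rw [h2] at him
    rw [aux_im_swap]
    push_cast
    linarith
  · intro hζ
    refine ⟨fun z => Complex.exp ((starRingEnd ℂ) ζ * z), ⟨0, Complex.exp_ne_zero _⟩,
      (Complex.differentiable_exp.comp ((differentiable_const _).mul differentiable_id)), ?_⟩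
    intro z χ hχ
    obtain ⟨k, hk⟩ := hζ χ hχ
    show Complex.exp ((starRingEnd ℂ) ζ * (z + χ)) = _
    rw [mul_add, Complex.exp_add, mul_comm]
    congr 1
    rw [Complex.exp_eq_exp_iff_exists_int]
    refine ⟨k, ?_⟩
    apply Complex.ext
    · have := aux_w_re ζ χ
      simp only [Complex.sub_re] at this
      simp [Complex.add_re, Complex.mul_re, Complex.mul_im, Complex.I_re, Complex.I_im,
        Complex.ofReal_re, Complex.ofReal_im, Complex.intCast_re, Complex.intCast_im]
      try linarith [this]
    · have h3 := aux_w_im ζ χ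
      have h4 := aux_im_swap ζ χ
      simp only [Complex.sub_im] at h3
      have h5 : ((ζ * (starRingEnd ℂ) χ) + (k : ℂ) * (2 * ↑Real.pi * Complex.I)).im
          = (ζ * (starRingEnd ℂ) χ).im + k * (2 * Real.pi) := by
        simp [Complex.add_im, Complex.mul_im]
      rw [h5]
      have h6 : (ζ * (starRingEnd ℂ) χ).im = -(Real.pi * k) := by linarith
      have h7 : ((starRingEnd ℂ) ζ * χ).im = (ζ * (starRingEnd ℂ) χ).im - 2 * (ζ * (starRingEnd ℂ) χ).im := by
        linarith
      rw [h7, h6]; ring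
end

section
/- Let L = ℤ + ℤτ ⊂ ℂ with Im(τ) > 0, let L^∨ be its dual lattice, and let ζ ∈ ℂ with ζ ∉ L^∨. Suppose f : ℂ → ℂ is a continuous, L-periodic function and g : ℂ → ℂ is entire with f(z) = exp(−ζ·conj(z))·g(z) for all z. Then f is bounded on ℂ; and if moreover g satisfies the automorphy relation g(z + χ) = exp(ζ·conj(χ))·g(z) for all χ ∈ L, then g ≡ 0 (equivalently f ≡ 0). -/
open Complex

theorem stmt_16 (τ : ℂ) (hτ : 0 < τ.im) (ζ : ℂ) (hζ : ζ ∉ dualLatticeSet τ)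
    (f g : ℂ → ℂ) (hf : Continuous f)
    (hper : ∀ z : ℂ, ∀ χ ∈ latticeSet τ, f (z + χ) = f z)
    (hg : Differentiable ℂ g)
    (hfg : ∀ z : ℂ, f z = Complex.exp (-ζ * (starRingEnd ℂ) z) * g z) :
    (∃ C : ℝ, ∀ z : ℂ, ‖f z‖ ≤ C) ∧
    ((∀ z : ℂ, ∀ χ ∈ latticeSet τ,
        g (z + χ) = Complex.exp (ζ * (starRingEnd ℂ) χ) * g z) →
      ∀ z : ℂ, g z = 0) := by
  have hτ0 : τ.im ≠ 0 := ne_of_gt hτ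
  -- Part 1: boundedness via the compact fundamental domain
  obtain ⟨C, hC⟩ : ∃ C, ∀ x ∈ (fun p : ℝ × ℝ => (p.1 : ℂ) + (p.2 : ℂ) * τ) ''
      (Set.Icc (0:ℝ) 1 ×ˢ Set.Icc (0:ℝ) 1), ‖f x‖ ≤ C := by
    exact ((isCompact_Icc.prod isCompact_Icc).image
      (by continuity)).exists_bound_of_continuousOn hf.continuousOn
  have hbound : ∀ z : ℂ, ‖f z‖ ≤ C := by
    intro z
    set b : ℝ := z.im / τ.im with hb
    set a : ℝ := z.re - b * τ.re with ha
    have hz : z = (a : ℂ) + (b : ℂ) * τ := by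
      apply Complex.ext
      · simp [ha, Complex.mul_re]
      · simp [hb, Complex.mul_im]
        field_simp
    have hχ : ((⌊a⌋ : ℂ) + (⌊b⌋ : ℂ) * τ) ∈ latticeSet τ := ⟨⌊a⌋, ⌊b⌋, rfl⟩
    have hzk : z = (z - ((⌊a⌋ : ℂ) + (⌊b⌋ : ℂ) * τ)) + ((⌊a⌋ : ℂ) + (⌊b⌋ : ℂ) * τ) := by ring
    have hfz : f z = f (z - ((⌊a⌋ : ℂ) + (⌊b⌋ : ℂ) * τ)) := by
      conv_lhs => rw [hzk]
      exact hper _ _ hχ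
    have hmem : z - ((⌊a⌋ : ℂ) + (⌊b⌋ : ℂ) * τ) ∈
        (fun p : ℝ × ℝ => (p.1 : ℂ) + (p.2 : ℂ) * τ) ''
        (Set.Icc (0:ℝ) 1 ×ˢ Set.Icc (0:ℝ) 1) := by
      refine ⟨(Int.fract a, Int.fract b), ⟨⟨Int.fract_nonneg a, (Int.fract_lt_one a).le⟩,
        ⟨Int.fract_nonneg b, (Int.fract_lt_one b).le⟩⟩, ?_⟩
      simp only [Int.fract]
      rw [hz]
      push_cast
      ring
    rw [hfz]
    simpa using hC _ hmem
  refine ⟨⟨C, hbound⟩, ?_⟩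
  -- Part 2
  intro haut z
  set G : ℂ → ℂ := fun w => g w * Complex.exp (-(starRingEnd ℂ) ζ * w) with hG
  have hGdiff : Differentiable ℂ G :=
    hg.mul (((differentiable_const _).mul differentiable_id).cexp)
  have habs : ∀ w : ℂ, ‖G w‖ = ‖f w‖ := by
    intro w
    rw [hG]
    simp only [hfg w, norm_mul, Complex.norm_exp]
    rw [mul_comm]
    congr 2
    simp [Complex.mul_re]
  have hGbdd : ∀ w : ℂ, ‖G w‖ ≤ C := by
    intro w
    rw [habs w]
    exact hbound w
  have hconst : ∀ w : ℂ, G w = G 0 := by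
    intro w
    apply hGdiff.apply_eq_apply_of_bounded
    apply Bornology.IsBounded.subset (Metric.isBounded_closedBall (x := (0:ℂ)) (r := C))
    rintro x ⟨w, rfl⟩
    simp only [Metric.mem_closedBall, dist_zero_right]
    exact hGbdd w
  have hgG : ∀ w : ℂ, g w = G w * Complex.exp ((starRingEnd ℂ) ζ * w) := by
    intro w
    rw [hG]
    rw [mul_assoc, ← Complex.exp_add]
    simp
  by_cases hc : G 0 = 0
  · rw [hgG z, hconst z, hc, zero_mul]
  · exfalso
    apply hζ
    intro χ hχmem
    have h1 : g χ = Complex.exp (ζ * (starRingEnd ℂ) χ) * g 0 := by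
      have := haut 0 χ hχmem
      simpa using this
    rw [hgG χ, hgG 0, hconst χ] at h1
    have h2 : Complex.exp ((starRingEnd ℂ) ζ * χ) = Complex.exp (ζ * (starRingEnd ℂ) χ) := by
      rw [mul_zero, Complex.exp_zero, mul_one, mul_comm (Complex.exp (ζ * (starRingEnd ℂ) χ)) (G 0)] at h1
      exact mul_left_cancel₀ hc h1
    rw [Complex.exp_eq_exp_iff_exists_int] at h2
    obtain ⟨n, hn⟩ := h2
    refine ⟨n, ?_⟩
    have him := congrArg Complex.im hn
    simp only [Complex.add_im, Complex.mul_im, Complex.mul_re, Complex.conj_re, Complex.conj_im,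
      Complex.I_re, Complex.I_im, Complex.ofReal_re, Complex.ofReal_im, Complex.intCast_re,
      Complex.intCast_im, Complex.re_ofNat, Complex.im_ofNat] at him ⊢
    linarith
end
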